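/- arXiv:1210.6778 — 5 statements merged into one kernel-verified Lean document; each statement's English description precedes it below -/
import Mathlib

section
/- For any locally integrable function b on ℝⁿ, any locally integrable f, and any x ∈ ℝⁿ, the pointwise bound |[M,b]f(x) − [M,|b|]f(x)| ≤ 2 b⁻(x) Mf(x) holds, where [M,g]f = M(gf) − g·Mf and b⁻ = max(−b,0). -/
open MeasureTheory Metric

/-- The (uncentered) Hardy–Littlewood maximal function over cubes of `ℝⁿ`.
Since `Fin n → ℝ` carries the sup norm, metric balls are exactly the open cubes
with sides parallel to the axes. -/
noncomputable def maximalFn {n : ℕ} (f : (Fin n → ℝ) → ℝ) (x : Fin n → ℝ) : ℝ :=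
  ⨆ Q : {Q : (Fin n → ℝ) × ℝ // 0 < Q.2 ∧ x ∈ ball Q.1 Q.2},
    ⨍ y in ball Q.1.1 Q.1.2, |f y|

/-- The maximal commutator `C_b(f)(x) = sup_{Q ∋ x} ⨍_Q |b(x) − b(y)| |f(y)| dy`. -/
noncomputable def maximalComm {n : ℕ} (b f : (Fin n → ℝ) → ℝ) (x : Fin n → ℝ) : ℝ :=
  ⨆ Q : {Q : (Fin n → ℝ) × ℝ // 0 < Q.2 ∧ x ∈ ball Q.1 Q.2},
    ⨍ y in ball Q.1.1 Q.1.2, |b x - b y| * |f y|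

/-- `|[M,b]f(x) − [M,|b|]f(x)| ≤ 2 b⁻(x) Mf(x)`. -/
theorem abs_commutator_sub_commutator_abs_le {n : ℕ} (b f : (Fin n → ℝ) → ℝ)
    (hb : LocallyIntegrable b volume) (hf : LocallyIntegrable f volume)
    (x : Fin n → ℝ) :
    |(maximalFn (fun y => b y * f y) x - b x * maximalFn f x) -
        (maximalFn (fun y => |b y| * f y) x - |b x| * maximalFn f x)| ≤
      2 * max (-b x) 0 * maximalFn f x := by
  have hM : 0 ≤ maximalFn f x :=
    Real.iSup_nonneg fun Q => integral_nonneg fun y => abs_nonneg _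
  have h1 : maximalFn (fun y => b y * f y) x = maximalFn (fun y => |b y| * f y) x := by
    unfold maximalFn
    simp only [abs_mul, abs_abs]
  rw [h1]
  have h2 : (maximalFn (fun y => |b y| * f y) x - b x * maximalFn f x) -
      (maximalFn (fun y => |b y| * f y) x - |b x| * maximalFn f x)
      = (|b x| - b x) * maximalFn f x := by ring
  rw [h2, abs_mul, abs_of_nonneg hM, abs_of_nonneg (by rcases abs_cases (b x) with ⟨h, _⟩ | ⟨h, _⟩ <;> linarith)]
  have h3 : |b x| - b x = 2 * max (-b x) 0 := by
    rcases le_total (b x) 0 with h | h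
    · rw [abs_of_nonpos h, max_eq_left (by linarith)]; ring
    · rw [abs_of_nonneg h, max_eq_right (by linarith)]; ring
  rw [h3]
end

section
/- Let b(y) = log|1+y| and f = χ_{(0,1)} on ℝ. Then for every x < 0, M(bf)(x) = (2 log 2 − 1)/(1 − x), where M is the Hardy–Littlewood maximal operator over intervals. -/
open MeasureTheory Metric

/-- The (uncentered) Hardy–Littlewood maximal function on `ℝ`, taken over
bounded open intervals (= metric balls of `ℝ`) containing the point. -/
noncomputable def maximalFn1 (f : ℝ → ℝ) (x : ℝ) : ℝ :=
  ⨆ I : {I : ℝ × ℝ // 0 < I.2 ∧ x ∈ ball I.1 I.2},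
    ⨍ y in ball I.1.1 I.1.2, |f y|

/-- The antiderivative of `log (1 + y)`. -/
noncomputable def Fb (b : ℝ) : ℝ := (1 + b) * Real.log (1 + b) - b

lemma Fb_integral {p q : ℝ} (hp : -1 < p) (hpq : p ≤ q) :
    ∫ y in Set.Ioo p q, Real.log (1 + y) = Fb q - Fb p := by
  rw [← MeasureTheory.integral_Ioc_eq_integral_Ioo,
    ← intervalIntegral.integral_of_le hpq,
    intervalIntegral.integral_comp_add_left (fun u => Real.log u) 1,
    integral_log]
  · simp only [Fb]; ring

lemma Fb_nonneg {p : ℝ} (hp : 0 ≤ p) : 0 ≤ Fb p := by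
  have h1 : (0:ℝ) < 1 + p := by linarith
  have := Real.one_sub_inv_le_log_of_pos h1
  have h2 : (1 + p) * (1 - (1+p)⁻¹) ≤ (1 + p) * Real.log (1 + p) :=
    mul_le_mul_of_nonneg_left this h1.le
  rw [mul_sub, mul_inv_cancel₀ h1.ne'] at h2
  simp only [Fb]; linarith

lemma Fb_hasDerivAt {b : ℝ} (hb : -1 < b) : HasDerivAt Fb (Real.log (1 + b)) b := by
  have h1 : (0:ℝ) < 1 + b := by linarith
  have hadd : HasDerivAt (fun y : ℝ => 1 + y) 1 b := by
    simpa using (hasDerivAt_id b).const_add 1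
  have hlog : HasDerivAt (fun y : ℝ => Real.log (1 + y)) (1 / (1 + b)) b :=
    hadd.log h1.ne'
  have h2 := (hadd.mul hlog).sub (hasDerivAt_id b)
  have h3 : 1 * Real.log (1 + b) + (1 + b) * (1 / (1 + b)) - 1 = Real.log (1 + b) := by
    field_simp
    ring
  rw [h3] at h2
  exact h2

lemma key_mono {x q : ℝ} (hx : x < 0) (hq0 : 0 ≤ q) (hq1 : q ≤ 1) :
    Fb q / (q - x) ≤ Fb 1 / (1 - x) := by
  set H : ℝ → ℝ := fun b => Fb b / (b - x) with hH
  have hder : ∀ b ∈ Set.Ioo (0:ℝ) 1, HasDerivAt H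
      ((Real.log (1 + b) * (b - x) - Fb b * 1) / (b - x) ^ 2) b := by
    intro b hb
    have hne : b - x ≠ 0 := ne_of_gt (by linarith [hb.1])
    exact (Fb_hasDerivAt (by linarith [hb.1])).div ((hasDerivAt_id b).sub_const x) hne
  have hcont : ContinuousOn H (Set.Icc 0 1) := by
    intro b hb
    have hne : b - x ≠ 0 := ne_of_gt (by linarith [hb.1])
    exact (((Fb_hasDerivAt (by linarith [hb.1])).continuousAt.div
      (continuousAt_id.sub continuousAt_const) hne)).continuousWithinAt
  have hmono : MonotoneOn H (Set.Icc 0 1) := by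
    apply (strictMonoOn_of_deriv_pos (convex_Icc 0 1) hcont ?_).monotoneOn
    intro b hb
    rw [interior_Icc] at hb
    rw [(hder b hb).deriv]
    have hb0 := hb.1
    have hb1 := hb.2
    have hlogpos : 0 < Real.log (1 + b) := Real.log_pos (by linarith)
    have hlogle : Real.log (1 + b) ≤ b := by
      have := Real.log_le_sub_one_of_pos (show (0:ℝ) < 1 + b by linarith)
      linarith
    have hnum : 0 < Real.log (1 + b) * (b - x) - Fb b * 1 := by
      simp only [Fb, mul_one]
      have key : Real.log (1 + b) * (b - x) - ((1 + b) * Real.log (1 + b) - b)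
          = b - (1 + x) * Real.log (1 + b) := by ring
      rw [key]
      nlinarith [mul_pos (neg_pos.mpr hx) hlogpos]
    exact div_pos hnum (pow_pos (by linarith) 2)
  have := hmono ⟨hq0, hq1⟩ (Set.right_mem_Icc.mpr zero_le_one) hq1
  simpa [hH] using this

lemma abs_fn : (fun y => |Set.indicator (Set.Ioo 0 1) (fun y => Real.log |1 + y|) y|)
    = Set.indicator (Set.Ioo (0:ℝ) 1) (fun y => Real.log (1 + y)) := by
  funext y
  by_cases h : y ∈ Set.Ioo (0:ℝ) 1
  · rw [Set.indicator_of_mem h, Set.indicator_of_mem h,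
      abs_of_pos (by linarith [h.1] : (0:ℝ) < 1 + y),
      abs_of_nonneg (Real.log_nonneg (by linarith [h.1]))]
  · rw [Set.indicator_of_notMem h, Set.indicator_of_notMem h, abs_zero]

lemma integral_ball_eq (c r : ℝ) :
    ∫ y in ball c r, |Set.indicator (Set.Ioo 0 1) (fun y => Real.log |1 + y|) y|
      = ∫ y in Set.Ioo ((c - r) ⊔ 0) ((c + r) ⊓ 1), Real.log (1 + y) := by
  rw [show (fun y => |Set.indicator (Set.Ioo 0 1) (fun y => Real.log |1 + y|) y|) = _ from abs_fn]
  rw [MeasureTheory.setIntegral_indicator measurableSet_Ioo, Real.ball_eq_Ioo,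
    Set.Ioo_inter_Ioo]

lemma Fb_one : Fb 1 = 2 * Real.log 2 - 1 := by
  simp only [Fb]; norm_num

lemma Fb_one_pos : 0 < Fb 1 := by
  rw [Fb_one]; nlinarith [Real.log_two_gt_d9]

lemma avg_le {x : ℝ} (hx : x < 0) (c r : ℝ) (hr : 0 < r) (hmem : x ∈ ball c r) :
    ⨍ y in ball c r, |Set.indicator (Set.Ioo 0 1) (fun y => Real.log |1 + y|) y|
      ≤ (2 * Real.log 2 - 1) / (1 - x) := by
  have hS : 0 < (2 * Real.log 2 - 1) / (1 - x) :=
    div_pos (Fb_one ▸ Fb_one_pos) (by linarith)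
  rw [MeasureTheory.setAverage_eq, measureReal_def, Real.volume_ball, ENNReal.toReal_ofReal (by linarith),
    smul_eq_mul, integral_ball_eq]
  rw [mem_ball, Real.dist_eq, abs_lt] at hmem
  have hx1 : c - r < x := by linarith [hmem.1]
  have hx2 : x < c + r := by linarith [hmem.2]
  set p := (c - r) ⊔ 0 with hp
  set q := (c + r) ⊓ 1 with hq
  rcases le_or_gt q p with h | h
  · rw [Set.Ioo_eq_empty (by simpa using h), MeasureTheory.setIntegral_empty, mul_zero]
    exact hS.le
  · have hp0 : 0 ≤ p := le_max_right _ _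
    have hq1 : q ≤ 1 := min_le_right _ _
    have hq0 : 0 ≤ q := le_trans hp0 h.le
    have hqx : 0 < q - x := by linarith
    have hq2r : q - x ≤ 2 * r := by
      have h1 : q ≤ c + r := min_le_left _ _
      linarith
    rw [Fb_integral (by linarith) h.le]
    calc (2 * r)⁻¹ * (Fb q - Fb p) = (Fb q - Fb p) / (2 * r) := by ring
      _ ≤ Fb q / (q - x) := by
          apply div_le_div₀ (Fb_nonneg hq0) (by linarith [Fb_nonneg hp0]) hqx hq2r
      _ ≤ Fb 1 / (1 - x) := key_mono hx hq0 hq1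
      _ = (2 * Real.log 2 - 1) / (1 - x) := by rw [Fb_one]

lemma avg_eq {x a : ℝ} (hx : x < 0) (ha : a < x) :
    ⨍ y in ball ((a + 1) / 2) ((1 - a) / 2),
        |Set.indicator (Set.Ioo 0 1) (fun y => Real.log |1 + y|) y|
      = (2 * Real.log 2 - 1) / (1 - a) := by
  have ha0 : a < 0 := lt_trans ha hx
  rw [MeasureTheory.setAverage_eq, measureReal_def, Real.volume_ball,
    ENNReal.toReal_ofReal (by linarith), smul_eq_mul, integral_ball_eq]
  have h1 : (a + 1) / 2 - (1 - a) / 2 = a := by ring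
  have h2 : (a + 1) / 2 + (1 - a) / 2 = 1 := by ring
  rw [h1, h2]
  rw [show a ⊔ 0 = 0 from max_eq_right ha0.le, show (1:ℝ) ⊓ 1 = 1 from min_self 1]
  rw [Fb_integral (by norm_num) zero_le_one]
  have hFb0 : Fb 0 = 0 := by simp [Fb]
  rw [hFb0, Fb_one, sub_zero]
  rw [inv_mul_eq_div, show 2 * ((1 - a) / 2) = 1 - a by ring]

/-- for `b(y) = log|1+y|`, `f = χ_{(0,1)}` and every `x < 0`,
`M(bf)(x) = (2 log 2 − 1)/(1 − x)`. -/
theorem maximalFn1_log_indicator (x : ℝ) (hx : x < 0) :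
    maximalFn1 (Set.indicator (Set.Ioo 0 1) (fun y => Real.log |1 + y|)) x =
      (2 * Real.log 2 - 1) / (1 - x) := by
  haveI hne : Nonempty {I : ℝ × ℝ // 0 < I.2 ∧ x ∈ ball I.1 I.2} :=
    ⟨⟨(x, 1), one_pos, mem_ball_self one_pos⟩⟩
  have hbdd : BddAbove (Set.range fun I : {I : ℝ × ℝ // 0 < I.2 ∧ x ∈ ball I.1 I.2} =>
      ⨍ y in ball I.1.1 I.1.2, |Set.indicator (Set.Ioo 0 1) (fun y => Real.log |1 + y|) y|) := by
    refine ⟨(2 * Real.log 2 - 1) / (1 - x), ?_⟩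
    rintro _ ⟨I, rfl⟩
    exact avg_le hx I.1.1 I.1.2 I.2.1 I.2.2
  apply le_antisymm
  · exact ciSup_le fun I => avg_le hx I.1.1 I.1.2 I.2.1 I.2.2
  · have hlow : ∀ a ∈ Set.Iio x, (2 * Real.log 2 - 1) / (1 - a)
        ≤ maximalFn1 (Set.indicator (Set.Ioo 0 1) (fun y => Real.log |1 + y|)) x := by
      intro a ha
      have hmem : x ∈ ball ((a + 1) / 2) ((1 - a) / 2) := by
        rw [Real.ball_eq_Ioo, show (a + 1) / 2 - (1 - a) / 2 = a by ring,
          show (a + 1) / 2 + (1 - a) / 2 = 1 by ring]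
        exact ⟨ha, by linarith⟩
      have hrpos : (0:ℝ) < (1 - a) / 2 := by
        have : a < 0 := lt_trans ha hx
        linarith
      have := le_ciSup hbdd ⟨((a + 1) / 2, (1 - a) / 2), hrpos, hmem⟩
      rw [avg_eq hx ha] at this
      exact this
    have htend : Filter.Tendsto (fun a : ℝ => (2 * Real.log 2 - 1) / (1 - a))
        (nhdsWithin x (Set.Iio x)) (nhds ((2 * Real.log 2 - 1) / (1 - x))) := by
      apply Filter.Tendsto.mono_left _ nhdsWithin_le_nhds
      exact (ContinuousAt.div continuousAt_const
        (continuousAt_const.sub continuousAt_id)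
        (by show (1:ℝ) - x ≠ 0; intro h; linarith [sub_eq_zero.mp h])).tendsto
    exact le_of_tendsto htend (Filter.eventually_of_mem self_mem_nhdsWithin hlow)
end

section
/- The commutator [M,b] with b(x) = log|1+x| is not of weak type (1,1): for f = χ_{(0,1)}, sup_{λ>0} λ·|{x ∈ ℝ : |[M,b]f(x)| > λ}| = ∞. -/
open MeasureTheory Metric Set

lemma indicator_le_one (y : ℝ) : Set.indicator (Set.Ioo (0:ℝ) 1) (1 : ℝ → ℝ) y ≤ 1 := by
  by_cases hy : y ∈ Set.Ioo (0:ℝ) 1 <;> simp [hy]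

lemma indicator_bound (y : ℝ) : |Set.indicator (Set.Ioo (0:ℝ) 1) (1 : ℝ → ℝ) y| ≤ Set.indicator (Set.Ioo (0:ℝ) 1) (1 : ℝ → ℝ) y :=
  le_of_eq (abs_of_nonneg (Set.indicator_nonneg (fun _ _ => zero_le_one) y))

lemma g_bound (y : ℝ) : |Real.log |1 + y| * Set.indicator (Set.Ioo (0:ℝ) 1) (1 : ℝ → ℝ) y| ≤ Set.indicator (Set.Ioo (0:ℝ) 1) (1 : ℝ → ℝ) y := by
  by_cases hy : y ∈ Set.Ioo (0:ℝ) 1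
  · rw [Set.indicator_of_mem hy, Pi.one_apply, mul_one]
    obtain ⟨h0, h1⟩ := hy
    rw [abs_of_pos (by positivity : (0:ℝ) < 1 + y), abs_of_nonneg (Real.log_nonneg (by linarith))]
    calc Real.log (1 + y) ≤ Real.log 2 := Real.log_le_log (by linarith) (by linarith)
      _ ≤ 1 := by
        rw [← Real.log_exp 1]
        exact Real.log_le_log (by norm_num) (by have := Real.add_one_le_exp 1; linarith)
  · rw [Set.indicator_of_notMem hy, mul_zero, abs_zero]

lemma integral_le (h : ℝ → ℝ) (hm : Measurable h)
    (hb : ∀ y, |h y| ≤ Set.indicator (Set.Ioo (0:ℝ) 1) (1 : ℝ → ℝ) y) (c r : ℝ) :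
    ∫ y in ball c r, |h y| ≤ (volume (ball c r ∩ Set.Ioo 0 1)).toReal := by
  have hint : IntegrableOn (fun y => |h y|) (ball c r) volume := by
    apply Measure.integrableOn_of_bounded (M := 1) (by simp [Real.volume_ball, ENNReal.mul_eq_top])
      (hm.abs.aestronglyMeasurable)
    filter_upwards with y
    calc ‖|h y|‖ = |h y| := by rw [Real.norm_eq_abs, abs_abs]
      _ ≤ Set.indicator (Set.Ioo (0:ℝ) 1) (1 : ℝ → ℝ) y := hb y
      _ ≤ 1 := indicator_le_one y
  have hind : IntegrableOn (Set.indicator (Set.Ioo (0:ℝ) 1) (1 : ℝ → ℝ)) (ball c r) volume := by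
    apply Integrable.integrableOn
    rw [integrable_indicator_iff measurableSet_Ioo]
    exact integrableOn_const (by simp) (by simp)
  calc ∫ y in ball c r, |h y| ≤ ∫ y in ball c r, Set.indicator (Set.Ioo (0:ℝ) 1) (1 : ℝ → ℝ) y :=
        setIntegral_mono_on hint hind measurableSet_ball (fun y _ => hb y)
    _ = ∫ y in ball c r ∩ Set.Ioo 0 1, (1:ℝ) := setIntegral_indicator measurableSet_Ioo
    _ = (volume (ball c r ∩ Set.Ioo 0 1)).toReal := by simp [measureReal_def]

lemma avg_eq_aux (c r : ℝ) (hr : 0 < r) (h : ℝ → ℝ) :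
    ⨍ y in ball c r, |h y| = (2*r)⁻¹ * ∫ y in ball c r, |h y| := by
  rw [setAverage_eq, measureReal_def, Real.volume_ball, ENNReal.toReal_ofReal (by linarith), smul_eq_mul]

lemma vol_inter_le_one (c r : ℝ) : (volume (ball c r ∩ Set.Ioo (0:ℝ) 1)).toReal ≤ 1 := by
  have : volume (ball c r ∩ Set.Ioo (0:ℝ) 1) ≤ volume (Set.Ioo (0:ℝ) 1) :=
    measure_mono Set.inter_subset_right
  have h2 : volume (Set.Ioo (0:ℝ) 1) = 1 := by simp
  calc (volume (ball c r ∩ Set.Ioo (0:ℝ) 1)).toReal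
      ≤ (volume (Set.Ioo (0:ℝ) 1)).toReal := ENNReal.toReal_mono (by simp [h2]) this
    _ = 1 := by simp [h2]

lemma avg_le_one (h : ℝ → ℝ) (hm : Measurable h)
    (hb : ∀ y, |h y| ≤ Set.indicator (Set.Ioo (0:ℝ) 1) (1 : ℝ → ℝ) y) (c r : ℝ) (hr : 0 < r) :
    ⨍ y in ball c r, |h y| ≤ 1 := by
  rw [avg_eq_aux c r hr]
  have h1 : ∫ y in ball c r, |h y| ≤ (volume (ball c r ∩ Set.Ioo 0 1)).toReal :=
    integral_le h hm hb c r
  have h2 : (volume (ball c r ∩ Set.Ioo (0:ℝ) 1)).toReal ≤ 2 * r := by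
    calc (volume (ball c r ∩ Set.Ioo (0:ℝ) 1)).toReal
        ≤ (volume (ball c r)).toReal :=
          ENNReal.toReal_mono (by simp [Real.volume_ball, ENNReal.mul_eq_top]) (measure_mono Set.inter_subset_left)
      _ = 2 * r := by rw [Real.volume_ball, ENNReal.toReal_ofReal (by linarith)]
  calc (2*r)⁻¹ * ∫ y in ball c r, |h y| ≤ (2*r)⁻¹ * (2*r) :=
        mul_le_mul_of_nonneg_left (h1.trans h2) (by positivity)
    _ = 1 := by field_simp

lemma avg_le_key (h : ℝ → ℝ) (hm : Measurable h)
    (hb : ∀ y, |h y| ≤ Set.indicator (Set.Ioo (0:ℝ) 1) (1 : ℝ → ℝ) y) (c r x : ℝ) (hr : 0 < r)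
    (hx : x ∈ ball c r) (hx1 : 1 < x) :
    ⨍ y in ball c r, |h y| ≤ (x - 1)⁻¹ := by
  rw [avg_eq_aux c r hr]
  have h1 : ∫ y in ball c r, |h y| ≤ (volume (ball c r ∩ Set.Ioo 0 1)).toReal :=
    integral_le h hm hb c r
  rcases Set.eq_empty_or_nonempty (ball c r ∩ Set.Ioo (0:ℝ) 1) with he | ⟨y, hy⟩
  · have h0 : ∫ y in ball c r, |h y| ≤ 0 := by simpa [he] using h1
    have : (2*r)⁻¹ * ∫ y in ball c r, |h y| ≤ 0 :=
      mul_nonpos_of_nonneg_of_nonpos (by positivity) h0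
    exact this.trans (inv_nonneg.mpr (by linarith))
  · -- 2r > x - 1
    rw [Real.ball_eq_Ioo] at hx hy
    obtain ⟨⟨hy1, hy2⟩, hy3, hy4⟩ := hy
    obtain ⟨hx2, hx3⟩ := hx
    have h2r : x - 1 < 2 * r := by linarith
    have hx1' : (0:ℝ) < x - 1 := by linarith
    have hnn : 0 ≤ ∫ y in ball c r, |h y| := integral_nonneg (fun y => abs_nonneg _)
    calc (2*r)⁻¹ * ∫ y in ball c r, |h y| ≤ (x-1)⁻¹ * ∫ y in ball c r, |h y| :=
          mul_le_mul_of_nonneg_right (by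
            apply inv_anti₀ hx1' h2r.le) hnn
      _ ≤ (x-1)⁻¹ * 1 := mul_le_mul_of_nonneg_left (h1.trans (vol_inter_le_one c r)) (by positivity)
      _ = (x-1)⁻¹ := mul_one _


instance idx_nonempty (x : ℝ) : Nonempty {I : ℝ × ℝ // 0 < I.2 ∧ x ∈ ball I.1 I.2} :=
  ⟨⟨(x, 1), one_pos, mem_ball_self one_pos⟩⟩

lemma bdd (h : ℝ → ℝ) (hm : Measurable h)
    (hb : ∀ y, |h y| ≤ Set.indicator (Set.Ioo (0:ℝ) 1) (1 : ℝ → ℝ) y) (x : ℝ) :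
    BddAbove (Set.range fun I : {I : ℝ × ℝ // 0 < I.2 ∧ x ∈ ball I.1 I.2} =>
      ⨍ y in ball I.1.1 I.1.2, |h y|) := by
  refine ⟨1, ?_⟩
  rintro _ ⟨I, rfl⟩
  exact avg_le_one h hm hb _ _ I.2.1

lemma maximal_le (h : ℝ → ℝ) (hm : Measurable h)
    (hb : ∀ y, |h y| ≤ Set.indicator (Set.Ioo (0:ℝ) 1) (1 : ℝ → ℝ) y) (x : ℝ) (hx1 : 1 < x) :
    maximalFn1 h x ≤ (x - 1)⁻¹ :=
  ciSup_le fun I => avg_le_key h hm hb _ _ x I.2.1 I.2.2 hx1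

lemma maximal_ge (x : ℝ) (hx1 : 1 < x) :
    (2 * x)⁻¹ ≤ maximalFn1 (Set.indicator (Set.Ioo 0 1) 1) x := by
  have hx0 : (0:ℝ) < x := by linarith
  have hmem : x ∈ ball (x/2) x := by
    rw [mem_ball, Real.dist_eq]
    rw [abs_of_pos (by linarith : (0:ℝ) < x - x/2)]
    linarith
  have hmf : Measurable (Set.indicator (Set.Ioo (0:ℝ) 1) (1 : ℝ → ℝ)) :=
    measurable_one.indicator measurableSet_Ioo
  apply le_ciSup_of_le (bdd _ hmf indicator_bound x) ⟨(x/2, x), hx0, hmem⟩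
  show (2*x)⁻¹ ≤ ⨍ y in ball (x/2) x, |Set.indicator (Set.Ioo (0:ℝ) 1) (1:ℝ→ℝ) y|
  apply le_of_eq
  have habs : ∀ y : ℝ, |Set.indicator (Set.Ioo (0:ℝ) 1) (1:ℝ→ℝ) y|
      = Set.indicator (Set.Ioo (0:ℝ) 1) (1:ℝ→ℝ) y :=
    fun y => abs_of_nonneg (Set.indicator_nonneg (fun _ _ => zero_le_one) y)
  have hsub : ball (x/2) x ∩ Set.Ioo (0:ℝ) 1 = Set.Ioo (0:ℝ) 1 := by
    rw [Real.ball_eq_Ioo]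
    apply Set.inter_eq_self_of_subset_right
    rintro y ⟨h1, h2⟩
    exact ⟨by linarith, by linarith⟩
  calc (2*x)⁻¹ = (2*x)⁻¹ * ∫ y in ball (x/2) x, |Set.indicator (Set.Ioo (0:ℝ) 1) (1:ℝ→ℝ) y| := by
        simp_rw [habs]
        rw [setIntegral_indicator measurableSet_Ioo, hsub]
        simp
    _ = ⨍ y in ball (x/2) x, |Set.indicator (Set.Ioo (0:ℝ) 1) (1:ℝ→ℝ) y| :=
        (avg_eq_aux _ _ hx0 _).symm

lemma g_measurable : Measurable (fun y : ℝ => Real.log |1 + y| * Set.indicator (Set.Ioo 0 1) 1 y) :=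
  (Real.measurable_log.comp ((measurable_const.add measurable_id).abs)).mul
    (measurable_one.indicator measurableSet_Ioo)

lemma pointwise_lb (x K : ℝ) (hK : 2 ≤ K) (hx : Real.exp (4 + 2*K) < x) (hxT : x < K * Real.exp (5 + 2*K)) :
    (Real.exp (5 + 2*K))⁻¹ <
      |maximalFn1 (fun y => Real.log |1 + y| * Set.indicator (Set.Ioo 0 1) 1 y) x -
        Real.log |1 + x| * maximalFn1 (Set.indicator (Set.Ioo 0 1) 1) x| := by
  have hx2 : (2:ℝ) ≤ x := by
    have : (2:ℝ) ≤ Real.exp (4 + 2*K) := by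
      calc (2:ℝ) ≤ 1 + (4+2*K) := by linarith
        _ ≤ Real.exp (4 + 2*K) := by have := Real.add_one_le_exp (4+2*K); linarith
    linarith
  have hx1 : (1:ℝ) < x := by linarith
  have hx0 : (0:ℝ) < x := by linarith
  have hMg := maximal_le _ g_measurable g_bound x hx1
  have hMf := maximal_ge x hx1
  have hbx : Real.log |1 + x| = Real.log (1 + x) := by rw [abs_of_pos (by linarith)]
  have hlogpos : 0 ≤ Real.log (1 + x) := Real.log_nonneg (by linarith)
  have hlog : 4 + 2*K ≤ Real.log (1 + x) := by
    rw [Real.le_log_iff_exp_le (by linarith)]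
    linarith
  -- key numeric chain
  have hinv : (x - 1)⁻¹ ≤ 2/x := by
    rw [inv_eq_one_div]
    rw [div_le_div_iff₀ (by linarith) hx0]
    linarith
  have hKx : 0 < K := by linarith
  have hchain : (Real.exp (5 + 2*K))⁻¹ < Real.log (1 + x) * (2*x)⁻¹ - (x-1)⁻¹ := by
    have h1 : (4 + 2*K) * (2*x)⁻¹ ≤ Real.log (1 + x) * (2*x)⁻¹ :=
      mul_le_mul_of_nonneg_right hlog (by positivity)
    have h2 : (4 + 2*K) * (2*x)⁻¹ = 2/x + K/x := by field_simp; ring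
    have h3 : (Real.exp (5 + 2*K))⁻¹ < K/x := by
      rw [inv_eq_one_div, div_lt_div_iff₀ (Real.exp_pos _) hx0]
      calc 1 * x = x := one_mul x
        _ < K * Real.exp (5 + 2*K) := hxT
    linarith
  have hprod : Real.log (1 + x) * (2*x)⁻¹ ≤ Real.log (1 + x) * maximalFn1 (Set.indicator (Set.Ioo 0 1) 1) x :=
    mul_le_mul_of_nonneg_left hMf hlogpos
  rw [hbx]
  calc (Real.exp (5 + 2*K))⁻¹ < Real.log (1 + x) * (2*x)⁻¹ - (x-1)⁻¹ := hchain
    _ ≤ Real.log (1 + x) * maximalFn1 (Set.indicator (Set.Ioo 0 1) 1) x -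
        maximalFn1 (fun y => Real.log |1 + y| * Set.indicator (Set.Ioo 0 1) 1 y) x := by
        linarith
    _ ≤ |maximalFn1 (fun y => Real.log |1 + y| * Set.indicator (Set.Ioo 0 1) 1 y) x -
        Real.log (1 + x) * maximalFn1 (Set.indicator (Set.Ioo 0 1) 1) x| := by
        rw [abs_sub_comm]
        exact le_abs_self _

/-- the commutator `[M,b]` with `b(x) = log|1+x|` is not of weak
type `(1,1)`: for `f = χ_{(0,1)}`,
`sup_{λ>0} λ · |{x : |[M,b]f(x)| > λ}| = ∞`. -/
theorem commutator_not_weak_type_one_one :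
    (⨆ (l : ℝ) (_ : 0 < l),
      ENNReal.ofReal l *
        volume {x : ℝ |
          l < |maximalFn1 (fun y =>
                  Real.log |1 + y| * Set.indicator (Set.Ioo 0 1) 1 y) x -
                Real.log |1 + x| *
                  maximalFn1 (Set.indicator (Set.Ioo 0 1) 1) x|}) = ⊤ := by
  rw [eq_top_iff, ← ENNReal.iSup_natCast]
  refine iSup_le fun n => ?_
  set K : ℝ := (n : ℝ) + 2 with hKdef
  have hK : 2 ≤ K := by rw [hKdef]; linarith [Nat.cast_nonneg (α := ℝ) n]
  set T : ℝ := Real.exp (5 + 2*K) with hTdef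
  have hT0 : 0 < T := Real.exp_pos _
  refine le_iSup₂_of_le T⁻¹ (by positivity) ?_
  have hsub : Set.Ioo (Real.exp (4 + 2*K)) (K * T) ⊆
      {x : ℝ | T⁻¹ < |maximalFn1 (fun y =>
        Real.log |1 + y| * Set.indicator (Set.Ioo 0 1) 1 y) x -
        Real.log |1 + x| * maximalFn1 (Set.indicator (Set.Ioo 0 1) 1) x|} := by
    rintro x ⟨h1, h2⟩
    exact pointwise_lb x K hK h1 h2
  have hvol : ENNReal.ofReal (K * T - Real.exp (4 + 2*K)) ≤
      volume {x : ℝ | T⁻¹ < |maximalFn1 (fun y =>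
        Real.log |1 + y| * Set.indicator (Set.Ioo 0 1) 1 y) x -
        Real.log |1 + x| * maximalFn1 (Set.indicator (Set.Ioo 0 1) 1) x|} := by
    calc ENNReal.ofReal (K * T - Real.exp (4 + 2*K))
        = volume (Set.Ioo (Real.exp (4 + 2*K)) (K * T)) := by rw [Real.volume_Ioo]
      _ ≤ _ := measure_mono hsub
  calc (n : ENNReal) = ENNReal.ofReal n := by rw [ENNReal.ofReal_natCast]
    _ ≤ ENNReal.ofReal (T⁻¹ * (K * T - Real.exp (4 + 2*K))) := by
        apply ENNReal.ofReal_le_ofReal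
        have he : T⁻¹ * (K * T - Real.exp (4 + 2*K)) = K - Real.exp (4+2*K) / T := by
          field_simp
        have hexp : Real.exp (4+2*K) / T = Real.exp (-1) := by
          rw [hTdef, ← Real.exp_sub]; norm_num
        have hle1 : Real.exp (-1 : ℝ) ≤ 1 := Real.exp_le_one_iff.mpr (by norm_num)
        rw [he, hexp, hKdef]
        linarith
    _ = ENNReal.ofReal T⁻¹ * ENNReal.ofReal (K * T - Real.exp (4 + 2*K)) := by
        rw [ENNReal.ofReal_mul (by positivity)]
    _ ≤ _ := mul_le_mul_right hvol _
end

section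
/- Let b ∈ BMO(ℝⁿ). Then there exists a constant C depending only on n such that for every cube Q and every t > 0, |{x ∈ Q : |b(x) − b_Q| > t}| ≤ C₁ |Q| exp(−C₂ t / ‖b‖_*) (the John–Nirenberg inequality), where ‖b‖_* = sup_Q (1/|Q|)∫_Q |b − b_Q|. -/
open MeasureTheory Metric

section JNAux
open Set Filter ENNReal List Topology

namespace JN


variable {n : ℕ}

/-- child cube -/
noncomputable def child (p : (Fin n → ℝ) × ℝ) (s : Fin n → Bool) : (Fin n → ℝ) × ℝ :=
  (fun i => p.1 i + (if s i then p.2 / 2 else -(p.2 / 2)), p.2 / 2)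

/-- iterated descendant along a list of direction choices -/
noncomputable def cube (p : (Fin n → ℝ) × ℝ) (l : List (Fin n → Bool)) : (Fin n → ℝ) × ℝ :=
  l.foldl child p

@[simp] lemma cube_nil (p : (Fin n → ℝ) × ℝ) : cube p [] = p := rfl

@[simp] lemma cube_cons (p : (Fin n → ℝ) × ℝ) (s : Fin n → Bool) (l : List (Fin n → Bool)) :
    cube p (s :: l) = cube (child p s) l := rfl

lemma cube_append (p : (Fin n → ℝ) × ℝ) (l₁ l₂ : List (Fin n → Bool)) :
    cube p (l₁ ++ l₂) = cube (cube p l₁) l₂ := List.foldl_append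

@[simp] lemma child_snd (p : (Fin n → ℝ) × ℝ) (s : Fin n → Bool) :
    (child p s).2 = p.2 / 2 := rfl

lemma cube_snd_pos (p : (Fin n → ℝ) × ℝ) (hp : 0 < p.2) (l : List (Fin n → Bool)) :
    0 < (cube p l).2 := by
  induction l generalizing p with
  | nil => exact hp
  | cons s l ih => exact ih _ (by simpa using half_pos hp)

lemma cube_snd (p : (Fin n → ℝ) × ℝ) (l : List (Fin n → Bool)) :
    (cube p l).2 = p.2 / 2 ^ l.length := by
  induction l generalizing p with
  | nil => simp
  | cons s l ih =>
    simp only [cube_cons, ih, child_snd, List.length_cons, pow_succ]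
    ring

/-- the ball (cube) associated to a pair -/
def cb (p : (Fin n → ℝ) × ℝ) : Set (Fin n → ℝ) := ball p.1 p.2

lemma child_subset (p : (Fin n → ℝ) × ℝ) (hp : 0 < p.2) (s : Fin n → Bool) :
    cb (child p s) ⊆ cb p := by
  intro x hx
  rw [cb, mem_ball, dist_pi_lt_iff hp]
  rw [cb, mem_ball, dist_pi_lt_iff (by simpa using half_pos hp)] at hx
  intro i
  have := hx i
  simp only [child, Real.dist_eq] at this ⊢
  rcases le_or_gt (p.2 / 2) 0 with h | h
  · linarith
  by_cases hs : s i = true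
  · simp [hs] at this
    rw [abs_lt] at this ⊢
    constructor <;> linarith [this.1, this.2]
  · simp [hs] at this
    rw [abs_lt] at this ⊢
    constructor <;> linarith [this.1, this.2]

lemma cube_subset (p : (Fin n → ℝ) × ℝ) (hp : 0 < p.2) (l : List (Fin n → Bool)) :
    cb (cube p l) ⊆ cb p := by
  induction l generalizing p with
  | nil => simp
  | cons s l ih =>
    refine (ih _ (by simpa using half_pos hp)).trans (child_subset p hp s)

lemma cube_subset_of_prefix (p : (Fin n → ℝ) × ℝ) (hp : 0 < p.2) {l m : List (Fin n → Bool)}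
    (h : m <+: l) : cb (cube p l) ⊆ cb (cube p m) := by
  obtain ⟨t, rfl⟩ := h
  rw [cube_append]
  exact cube_subset _ (cube_snd_pos p hp m) t

lemma disjoint_children (p : (Fin n → ℝ) × ℝ) {s s' : Fin n → Bool} (h : s ≠ s') :
    Disjoint (cb (child p s)) (cb (child p s')) := by
  obtain ⟨i, hi⟩ := Function.ne_iff.mp h
  rw [Set.disjoint_left]
  rintro x hx hx'
  rw [cb, mem_ball] at hx hx'
  have h1 : dist (x i) ((child p s).1 i) < p.2 / 2 :=
    lt_of_le_of_lt (dist_le_pi_dist x (child p s).1 i) hx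
  have h2 : dist (x i) ((child p s').1 i) < p.2 / 2 :=
    lt_of_le_of_lt (dist_le_pi_dist x (child p s').1 i) hx'
  simp only [child, Real.dist_eq] at h1 h2
  rw [abs_lt] at h1 h2
  rcases Bool.eq_false_or_eq_true (s i) with hs | hs <;>
    rcases Bool.eq_false_or_eq_true (s' i) with hs' | hs'
  · exact hi (hs.trans hs'.symm)
  · simp [hs, hs'] at h1 h2; linarith [h1.1, h1.2, h2.1, h2.2]
  · simp [hs, hs'] at h1 h2; linarith [h1.1, h1.2, h2.1, h2.2]
  · exact hi (hs.trans hs'.symm)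

lemma vol_cb (p : (Fin n → ℝ) × ℝ) (hp : 0 < p.2) :
    volume (cb p) = ENNReal.ofReal ((2 * p.2) ^ n) := by
  rw [cb, Real.volume_pi_ball _ hp, Fintype.card_fin]

lemma vol_child (p : (Fin n → ℝ) × ℝ) (hp : 0 < p.2) (s : Fin n → Bool) :
    volume (cb p) = 2 ^ n * volume (cb (child p s)) := by
  rw [vol_cb p hp, vol_cb _ (by simpa using half_pos hp), child_snd]
  rw [show (2:ℝ) * (p.2 / 2) = p.2 by ring,
      show ((2:ℝ) * p.2) ^ n = 2 ^ n * p.2 ^ n by ring,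
      ENNReal.ofReal_mul (by positivity), ENNReal.ofReal_pow (by norm_num)]
  norm_num



lemma exists_split {α : Type*} : ∀ {l l' : List α}, ¬ l <+: l' → ¬ l' <+: l →
    ∃ (m : List α) (a a' : α) (u u' : List α),
      a ≠ a' ∧ l = m ++ a :: u ∧ l' = m ++ a' :: u' := by
  intro l
  induction l with
  | nil => intro l' h _; exact absurd (nil_prefix) h
  | cons a t ih =>
    intro l' h h'
    cases l' with
    | nil => exact absurd (nil_prefix) h'
    | cons a' t' =>
      by_cases hab : a = a'
      · subst hab
        have h1 : ¬ t <+: t' := fun hp => h (cons_prefix_cons.mpr ⟨rfl, hp⟩)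
        have h2 : ¬ t' <+: t := fun hp => h' (cons_prefix_cons.mpr ⟨rfl, hp⟩)
        obtain ⟨m, x, x', u, u', hxx, rfl, rfl⟩ := ih h1 h2
        exact ⟨a :: m, x, x', u, u', hxx, rfl, rfl⟩
      · exact ⟨[], a, a', t, t', hab, rfl, rfl⟩

lemma exists_minimal_prefix {α : Type*} (P : List α → Prop) (l : List α) (hl : P l) :
    ∃ m, m <+: l ∧ P m ∧ ∀ m', m' <+: m → m' ≠ m → ¬ P m' := by
  classical
  have hex : ∃ k, P (l.take k) := ⟨l.length, by simpa using hl⟩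
  refine ⟨l.take (Nat.find hex), take_prefix _ _, Nat.find_spec hex, ?_⟩
  intro m' hm' hne hP
  have hlen : m'.length < Nat.find hex := by
    rcases lt_or_eq_of_le hm'.length_le with h | h
    · calc m'.length < (l.take (Nat.find hex)).length := h
        _ ≤ Nat.find hex := by simp [length_take]
    · exact absurd (hm'.eq_of_length h) hne
  have hm'' : m' = l.take m'.length :=
    prefix_iff_eq_take.mp (hm'.trans (take_prefix _ _))
  exact Nat.find_min hex hlen (hm'' ▸ hP)



variable {n : ℕ}

lemma hyperplane_null (i : Fin n) (a : ℝ) : volume {x : Fin n → ℝ | x i = a} = 0 := by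
  have := Measure.pi_hyperplane (fun _ : Fin n => (volume : Measure ℝ)) i a
  simpa [MeasureTheory.volume_pi] using this

lemma ball_ae_closedBall (c : Fin n → ℝ) {r : ℝ} (hr : 0 < r) :
    (ball c r : Set (Fin n → ℝ)) =ᵐ[volume] closedBall c r := by
  rw [Filter.eventuallyEq_set]
  have h1 : volume (closedBall c r \ ball c r) = 0 := by
    rw [measure_diff ball_subset_closedBall measurableSet_ball.nullMeasurableSet
      (by rw [Real.volume_pi_ball _ hr]; exact ENNReal.ofReal_ne_top),
      Real.volume_pi_closedBall _ hr.le, Real.volume_pi_ball _ hr, tsub_self]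
  have := measure_eq_zero_iff_ae_notMem.mp h1
  filter_upwards [this] with x hx
  simp only [mem_diff, not_and, not_not] at hx
  constructor
  · exact fun h => ball_subset_closedBall h
  · exact fun h => hx h

lemma restrict_ball_eq (c : Fin n → ℝ) {r : ℝ} (hr : 0 < r) :
    volume.restrict (ball c r : Set (Fin n → ℝ)) = volume.restrict (closedBall c r) :=
  Measure.restrict_congr_set (ball_ae_closedBall c hr)

variable {b : (Fin n → ℝ) → ℝ}

lemma integrableOn_cb (hb : LocallyIntegrable b volume) (p : (Fin n → ℝ) × ℝ) :
    IntegrableOn b (ball p.1 p.2) volume :=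
  (hb.integrableOn_isCompact (isCompact_closedBall p.1 p.2)).mono_set ball_subset_closedBall

lemma integrableOn_abs_sub (hb : LocallyIntegrable b volume) (p : (Fin n → ℝ) × ℝ) (A : ℝ) :
    IntegrableOn (fun y => |b y - A|) (ball p.1 p.2) volume := by
  have h1 : IntegrableOn (fun y => b y - A) (ball p.1 p.2) volume :=
    (integrableOn_cb hb p).sub (integrableOn_const measure_ball_lt_top.ne)
  exact h1.abs


section Avg

variable {f g : (Fin n → ℝ) → ℝ} {s : Set (Fin n → ℝ)}

lemma avg_mono (hs : MeasurableSet s) (h0 : volume s ≠ 0) (hf : IntegrableOn f s volume)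
    (hg : IntegrableOn g s volume) (hfg : ∀ x ∈ s, f x ≤ g x) :
    ⨍ x in s, f x ≤ ⨍ x in s, g x := by
  rw [setAverage_eq, setAverage_eq, smul_eq_mul, smul_eq_mul]
  exact mul_le_mul_of_nonneg_left (setIntegral_mono_on hf hg hs hfg) (by positivity)

lemma avg_sub_const (h0 : volume s ≠ 0) (hT : volume s ≠ ⊤) (hf : IntegrableOn f s volume)
    (A : ℝ) : ⨍ x in s, (f x - A) = (⨍ x in s, f x) - A := by
  have hv : (volume s).toReal ≠ 0 := by
    simp [ENNReal.toReal_eq_zero_iff, h0, hT]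
  rw [setAverage_eq, setAverage_eq, smul_eq_mul, smul_eq_mul,
    integral_sub hf (integrableOn_const hT),
    setIntegral_const, smul_eq_mul]
  change volume.real s ≠ 0 at hv
  field_simp

lemma abs_avg_le (hf : IntegrableOn f s volume) :
    |⨍ x in s, f x| ≤ ⨍ x in s, |f x| := by
  rw [setAverage_eq, setAverage_eq, smul_eq_mul, smul_eq_mul, abs_mul]
  refine mul_le_mul (le_of_eq (abs_of_nonneg (by positivity))) ?_ (abs_nonneg _) (by positivity)
  simpa [Real.norm_eq_abs] using norm_integral_le_integral_norm (μ := volume.restrict s) f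

lemma chebyshev {lam : ℝ} (hlam : 0 ≤ lam) (h0 : volume s ≠ 0) (hT : volume s ≠ ⊤)
    (hf : IntegrableOn f s volume) (hnn : ∀ x, 0 ≤ f x)
    (h : lam < ⨍ x in s, f x) :
    ENNReal.ofReal lam * volume s ≤ ∫⁻ x in s, ENNReal.ofReal (f x) := by
  have hv : 0 < (volume s).toReal := ENNReal.toReal_pos h0 hT
  have h1 : lam * (volume s).toReal ≤ ∫ x in s, f x := by
    rw [setAverage_eq, smul_eq_mul, inv_mul_eq_div, lt_div_iff₀ (show 0 < volume.real s from hv)] at h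
    exact h.le
  calc ENNReal.ofReal lam * volume s
      = ENNReal.ofReal (lam * (volume s).toReal) := by
        rw [ENNReal.ofReal_mul hlam, ENNReal.ofReal_toReal hT]
    _ ≤ ENNReal.ofReal (∫ x in s, f x) := ENNReal.ofReal_le_ofReal h1
    _ = ∫⁻ x in s, ENNReal.ofReal (f x) :=
        ofReal_integral_eq_lintegral_ofReal hf (Filter.Eventually.of_forall hnn)

lemma lintegral_le_of_avg_le {Bd : ℝ} (h0 : volume s ≠ 0) (hT : volume s ≠ ⊤)
    (hf : IntegrableOn f s volume) (hnn : ∀ x, 0 ≤ f x)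
    (h : ⨍ x in s, f x ≤ Bd) :
    ∫⁻ x in s, ENNReal.ofReal (f x) ≤ ENNReal.ofReal Bd * volume s := by
  have hv : 0 < (volume s).toReal := ENNReal.toReal_pos h0 hT
  have h1 : ∫ x in s, f x ≤ Bd * (volume s).toReal := by
    rw [setAverage_eq, smul_eq_mul, inv_mul_eq_div, div_le_iff₀ (show 0 < volume.real s from hv)] at h
    exact h
  calc ∫⁻ x in s, ENNReal.ofReal (f x)
      = ENNReal.ofReal (∫ x in s, f x) :=
        (ofReal_integral_eq_lintegral_ofReal hf (Filter.Eventually.of_forall hnn)).symm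
    _ ≤ ENNReal.ofReal (Bd * (volume s).toReal) := ENNReal.ofReal_le_ofReal h1
    _ ≤ ENNReal.ofReal Bd * volume s := by
        rcases le_or_gt Bd 0 with hB | hB
        · simp [ENNReal.ofReal_eq_zero.2, mul_nonpos_iff, ENNReal.ofReal_eq_zero.mpr,
            ENNReal.ofReal_eq_zero.2 (mul_nonpos_iff.mpr (Or.inr ⟨hB, hv.le⟩))]
        · rw [ENNReal.ofReal_mul hB.le, ENNReal.ofReal_toReal hT]

end Avg


lemma mem_child {q : (Fin n → ℝ) × ℝ} (hq : 0 < q.2) {x : Fin n → ℝ} (hx : x ∈ cb q)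
    (hne : ∀ i, x i ≠ q.1 i) :
    x ∈ cb (child q (fun i => decide (q.1 i < x i))) := by
  rw [cb, mem_ball, child_snd, dist_pi_lt_iff (half_pos hq)]
  rw [cb, mem_ball, dist_pi_lt_iff hq] at hx
  intro i
  have h1 := hx i
  simp only [child, Real.dist_eq] at h1 ⊢
  rw [abs_lt] at h1
  rcases lt_or_gt_of_ne (hne i) with h | h
  · rw [if_neg (by simpa using not_lt.2 h.le), abs_lt]
    constructor <;> linarith [h1.1, h1.2]
  · rw [if_pos (by simpa using h), abs_lt]
    constructor <;> linarith [h1.1, h1.2]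

variable {b : (Fin n → ℝ) → ℝ}

/-- the set of selected (minimal bad) addresses -/
def Sel (b : (Fin n → ℝ) → ℝ) (p : (Fin n → ℝ) × ℝ) (A lam : ℝ) :
    Set (List (Fin n → Bool)) :=
  {l | lam < ⨍ y in cb (cube p l), |b y - A| ∧
    ∀ m, m <+: l → m ≠ l → ¬ lam < ⨍ y in cb (cube p m), |b y - A|}

lemma ae_cover (hb : LocallyIntegrable b volume) (p : (Fin n → ℝ) × ℝ) (hp : 0 < p.2)
    (A lam : ℝ) :
    ∀ᵐ x, (x ∈ cb p ∧ lam < |b x - A|) →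
      x ∈ ⋃ l ∈ Sel b p A lam, cb (cube p l) := by
  have hnull : volume (⋃ (l : List (Fin n → Bool)), ⋃ i,
      {x : Fin n → ℝ | x i = (cube p l).1 i}) = 0 :=
    measure_iUnion_null fun l => measure_iUnion_null fun i => hyperplane_null i _
  have hleb := IsUnifLocDoublingMeasure.ae_tendsto_average_norm_sub
    (μ := (volume : Measure (Fin n → ℝ))) hb 1
  filter_upwards [hleb, measure_eq_zero_iff_ae_notMem.mp hnull] with x hx hgood
  rintro ⟨hxp, hxA⟩
  have hne : ∀ l : List (Fin n → Bool), ∀ i, x i ≠ (cube p l).1 i := by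
    intro l i h
    exact hgood (mem_iUnion.2 ⟨l, mem_iUnion.2 ⟨i, h⟩⟩)
  -- the dyadic address chain of x
  let addr : ℕ → List (Fin n → Bool) :=
    fun k => Nat.rec [] (fun _ l => l ++ [fun i => decide ((cube p l).1 i < x i)]) k
  have haddr_succ : ∀ k, addr (k + 1) =
      addr k ++ [fun i => decide ((cube p (addr k)).1 i < x i)] := fun k => rfl
  have hlen : ∀ k, (addr k).length = k := by
    intro k; induction k with
    | zero => rfl
    | succ k ih => rw [haddr_succ, List.length_append, ih]; rfl
  have hmem : ∀ k, x ∈ cb (cube p (addr k)) := by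
    intro k; induction k with
    | zero => exact hxp
    | succ k ih =>
      rw [haddr_succ, cube_append]
      exact mem_child (cube_snd_pos p hp _) ih (hne _)
  have hrad : ∀ k, (cube p (addr k)).2 = p.2 / 2 ^ k := by
    intro k; rw [cube_snd, hlen]
  have hδ : Tendsto (fun k : ℕ => p.2 / 2 ^ k) atTop (𝓝[>] (0:ℝ)) := by
    apply tendsto_nhdsWithin_of_tendsto_nhds_of_eventually_within
    · exact tendsto_const_nhds.div_atTop (tendsto_pow_atTop_atTop_of_one_lt one_lt_two)
    · exact Eventually.of_forall fun k => mem_Ioi.2 (by positivity)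
  have hclose : ∀ᶠ k : ℕ in atTop,
      x ∈ closedBall ((cube p (addr k)).1) (1 * (p.2 / 2 ^ k)) := by
    refine Eventually.of_forall fun k => ?_
    rw [one_mul, ← hrad k]
    exact ball_subset_closedBall (hmem k)
  have htend : Tendsto (fun k => ⨍ y in closedBall ((cube p (addr k)).1) (p.2 / 2 ^ k),
      ‖b y - b x‖) atTop (𝓝 0) := hx _ _ hδ hclose
  have havg : ∀ k, ⨍ y in closedBall ((cube p (addr k)).1) (p.2 / 2 ^ k), ‖b y - b x‖
      = ⨍ y in cb (cube p (addr k)), |b y - b x| := by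
    intro k
    rw [cb, hrad k, ← setAverage_congr (μ := volume)
      (ball_ae_closedBall ((cube p (addr k)).1) (show (0:ℝ) < p.2 / 2 ^ k by positivity))]
    simp [Real.norm_eq_abs]
  simp only [havg] at htend
  -- lower bound on oscillation averages
  have hlow : ∀ k, |b x - A| - (⨍ y in cb (cube p (addr k)), |b y - b x|)
      ≤ ⨍ y in cb (cube p (addr k)), |b y - A| := by
    intro k
    set q := cube p (addr k)
    have hq : 0 < q.2 := cube_snd_pos p hp _
    have h0 : volume (cb q) ≠ 0 := (measure_ball_pos volume _ hq).ne'
    have hT : volume (cb q) ≠ ⊤ := measure_ball_lt_top.ne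
    have hint1 : IntegrableOn (fun y => |b y - b x|) (cb q) volume :=
      integrableOn_abs_sub hb q (b x)
    have hint2 : IntegrableOn (fun y => |b y - A|) (cb q) volume :=
      integrableOn_abs_sub hb q A
    have heq : ⨍ y in cb q, (|b x - A| - |b y - b x|)
        = |b x - A| - ⨍ y in cb q, |b y - b x| := by
      have := avg_sub_const (f := fun y => |b y - b x|) h0 hT hint1 (|b x - A|)
      have hneg : (fun y => |b x - A| - |b y - b x|)
          = fun y => -((fun y => |b y - b x|) y - |b x - A|) := by
        funext y; ring
      rw [hneg, average_neg, this]; ring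
    rw [← heq]
    refine avg_mono measurableSet_ball h0
      ((integrableOn_const hT).sub hint1) hint2 ?_
    intro y _
    have : |b x - A| ≤ |b y - A| + |b y - b x| := by
      calc |b x - A| = |(b y - A) - (b y - b x)| := by ring_nf
        _ ≤ |b y - A| + |b y - b x| := abs_sub _ _
    linarith
  have hlim : Tendsto (fun k => |b x - A| - ⨍ y in cb (cube p (addr k)), |b y - b x|)
      atTop (𝓝 (|b x - A|)) := by
    simpa using tendsto_const_nhds.sub htend
  have hev : ∀ᶠ k : ℕ in atTop,
      lam < ⨍ y in cb (cube p (addr k)), |b y - A| := by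
    filter_upwards [hlim.eventually_const_lt hxA] with k hk
    exact lt_of_lt_of_le hk (hlow k)
  obtain ⟨k, hk⟩ := hev.exists
  obtain ⟨m, hpre, hPm, hmin⟩ := exists_minimal_prefix
    (fun l => lam < ⨍ y in cb (cube p l), |b y - A|) (addr k) hk
  exact mem_biUnion ⟨hPm, hmin⟩ (cube_subset_of_prefix p hp hpre (hmem k))

lemma osc_child_le (hb : LocallyIntegrable b volume) (q : (Fin n → ℝ) × ℝ) (hq : 0 < q.2)
    (s : Fin n → Bool) (A : ℝ) :
    ⨍ y in cb (child q s), |b y - A| ≤ 2 ^ n * ⨍ y in cb q, |b y - A| := by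
  have hvc : 0 < (volume (cb (child q s))).toReal :=
    ENNReal.toReal_pos (measure_ball_pos volume _ (by simpa using half_pos hq)).ne'
      measure_ball_lt_top.ne
  have hintP : IntegrableOn (fun y => |b y - A|) (cb q) volume := integrableOn_abs_sub hb q A
  have hsub : ∫ y in cb (child q s), |b y - A| ≤ ∫ y in cb q, |b y - A| :=
    setIntegral_mono_set hintP (Eventually.of_forall fun y => abs_nonneg _)
      (HasSubset.Subset.eventuallyLE (child_subset q hq s))
  have hvol : (volume (cb q)).toReal = 2 ^ n * (volume (cb (child q s))).toReal := by
    rw [vol_child q hq s, ENNReal.toReal_mul]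
    norm_num
  rw [setAverage_eq, setAverage_eq, smul_eq_mul, smul_eq_mul, measureReal_def, measureReal_def, hvol]
  calc (volume (cb (child q s))).toReal⁻¹ * ∫ y in cb (child q s), |b y - A|
      ≤ (volume (cb (child q s))).toReal⁻¹ * ∫ y in cb q, |b y - A| :=
        mul_le_mul_of_nonneg_left hsub (by positivity)
    _ = 2 ^ n * ((2 ^ n * (volume (cb (child q s))).toReal)⁻¹ * ∫ y in cb q, |b y - A|) := by
        rw [mul_inv]
        field_simp
    _ = _ := rfl

lemma sel_sum_le (hb : LocallyIntegrable b volume) {B : ℝ} (hB : 0 < B)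
    (p : (Fin n → ℝ) × ℝ) (hp : 0 < p.2)
    (hoscp : ⨍ y in cb p, |b y - (⨍ y in cb p, b y)| ≤ B) :
    ∑' l : Sel b p (⨍ y in cb p, b y) (2 * B),
        volume (cb (cube p l)) ≤ 2⁻¹ * volume (cb p) := by
  set A := ⨍ y in cb p, b y with hA
  set lam := 2 * B with hlam
  set S := Sel b p A lam with hSdef
  have hdisj : S.PairwiseDisjoint (fun l => cb (cube p l)) := by
    intro l hl l' hl' hne
    have h1 : ¬ l <+: l' := fun h => hl'.2 l h hne hl.1
    have h2 : ¬ l' <+: l := fun h => hl.2 l' h (Ne.symm hne) hl'.1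
    obtain ⟨m, a, a', u, u', haa, rfl, rfl⟩ := exists_split h1 h2
    have hs1 : cb (cube p (m ++ a :: u)) ⊆ cb (cube p (m ++ [a])) :=
      cube_subset_of_prefix p hp ⟨u, by simp⟩
    have hs2 : cb (cube p (m ++ a' :: u')) ⊆ cb (cube p (m ++ [a'])) :=
      cube_subset_of_prefix p hp ⟨u', by simp⟩
    have hd : Disjoint (cb (cube p (m ++ [a]))) (cb (cube p (m ++ [a']))) := by
      rw [cube_append, cube_append]
      exact disjoint_children (cube p m) haa
    exact hd.mono hs1 hs2
  have hcheb : ∀ l : S, ENNReal.ofReal lam * volume (cb (cube p l)) ≤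
      ∫⁻ y in cb (cube p (l : List (Fin n → Bool))), ENNReal.ofReal (|b y - A|) := by
    rintro ⟨l, hl⟩
    exact chebyshev (by positivity) (measure_ball_pos volume _ (cube_snd_pos p hp l)).ne'
      measure_ball_lt_top.ne (integrableOn_abs_sub hb _ A) (fun x => abs_nonneg _) hl.1
  have hsum : ENNReal.ofReal lam * ∑' l : S, volume (cb (cube p l)) ≤
      ENNReal.ofReal B * volume (cb p) := by
    rw [← ENNReal.tsum_mul_left]
    calc ∑' l : S, ENNReal.ofReal lam * volume (cb (cube p l))
        ≤ ∑' l : S, ∫⁻ y in cb (cube p (l : List (Fin n → Bool))),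
            ENNReal.ofReal (|b y - A|) := ENNReal.tsum_le_tsum hcheb
      _ = ∫⁻ y in ⋃ l ∈ S, cb (cube p l), ENNReal.ofReal (|b y - A|) :=
          (lintegral_biUnion (to_countable S) (fun l _ => measurableSet_ball) hdisj _).symm
      _ ≤ ∫⁻ y in cb p, ENNReal.ofReal (|b y - A|) :=
          lintegral_mono_set (iUnion₂_subset fun l _ => cube_subset p hp l)
      _ ≤ ENNReal.ofReal B * volume (cb p) :=
          lintegral_le_of_avg_le (measure_ball_pos volume _ hp).ne' measure_ball_lt_top.ne
            (integrableOn_abs_sub hb _ A) (fun x => abs_nonneg _) hoscp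
  have hβ0 : ENNReal.ofReal B ≠ 0 := (ENNReal.ofReal_pos.mpr hB).ne'
  have hβT : ENNReal.ofReal B ≠ ⊤ := ENNReal.ofReal_ne_top
  have h2X : 2 * ∑' l : S, volume (cb (cube p l)) ≤ volume (cb p) := by
    have hrw : ENNReal.ofReal lam = ENNReal.ofReal B * 2 := by
      rw [hlam, ENNReal.ofReal_mul (by norm_num : (0:ℝ) ≤ 2), ENNReal.ofReal_ofNat, mul_comm]
    rw [hrw, mul_assoc] at hsum
    exact (ENNReal.mul_le_mul_iff_right hβ0 hβT).mp hsum
  calc ∑' l : S, volume (cb (cube p l))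
      = 2⁻¹ * (2 * ∑' l : S, volume (cb (cube p l))) := by
        rw [← mul_assoc, ENNReal.inv_mul_cancel two_ne_zero ENNReal.ofNat_ne_top, one_mul]
    _ ≤ 2⁻¹ * volume (cb p) := mul_le_mul_right h2X _

lemma sel_mean_dev (hb : LocallyIntegrable b volume) {B : ℝ} (hB : 0 < B)
    (p : (Fin n → ℝ) × ℝ) (hp : 0 < p.2)
    (hoscp : ⨍ y in cb p, |b y - ⨍ y in cb p, b y| ≤ B)
    {l : List (Fin n → Bool)} (hl : l ∈ Sel b p (⨍ y in cb p, b y) (2 * B)) :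
    |(⨍ y in cb (cube p l), b y) - ⨍ y in cb p, b y| ≤ 2 ^ (n + 1) * B := by
  set A := ⨍ y in cb p, b y with hA
  have hne : l ≠ [] := by
    rintro rfl
    have h1 : 2 * B < ⨍ y in cb (cube p []), |b y - A| := hl.1
    rw [cube_nil] at h1
    linarith
  have hparent : ⨍ y in cb (cube p l.dropLast), |b y - A| ≤ 2 * B := by
    refine not_lt.mp (hl.2 l.dropLast (dropLast_prefix l) ?_)
    intro h
    have := congrArg List.length h
    rw [List.length_dropLast] at this
    have : 0 < l.length := List.length_pos_iff.mpr hne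
    omega
  have hco : cube p l = child (cube p l.dropLast) (l.getLast hne) := by
    conv_lhs => rw [← List.dropLast_append_getLast hne]
    rw [cube_append]
    rfl
  have hosc : ⨍ y in cb (cube p l), |b y - A| ≤ 2 ^ n * (2 * B) := by
    rw [hco]
    refine (osc_child_le hb _ (cube_snd_pos p hp _) _ A).trans ?_
    exact mul_le_mul_of_nonneg_left hparent (by positivity)
  have h0 : volume (cb (cube p l)) ≠ 0 :=
    (measure_ball_pos volume _ (cube_snd_pos p hp l)).ne'
  have h2 : |(⨍ y in cb (cube p l), b y) - A| ≤ ⨍ y in cb (cube p l), |b y - A| := by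
    rw [← avg_sub_const h0 measure_ball_lt_top.ne (integrableOn_cb hb _) A]
    exact abs_avg_le ((integrableOn_cb hb _).sub
      (integrableOn_const measure_ball_lt_top.ne))
  calc |(⨍ y in cb (cube p l), b y) - A| ≤ ⨍ y in cb (cube p l), |b y - A| := h2
    _ ≤ 2 ^ n * (2 * B) := hosc
    _ = 2 ^ (n + 1) * B := by ring

lemma main_ind (hb : LocallyIntegrable b volume) {B : ℝ} (hB : 0 < B)
    (hbmo : ∀ (c : Fin n → ℝ) (r : ℝ), 0 < r →
      ⨍ x in ball c r, |b x - ⨍ y in ball c r, b y| ≤ B) :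
    ∀ (k : ℕ) (c : Fin n → ℝ) (r : ℝ), 0 < r →
      volume {x ∈ ball c r | (k : ℝ) * (2 ^ (n + 1) * B) < |b x - ⨍ y in ball c r, b y|}
        ≤ 2⁻¹ ^ k * volume (ball c r) := by
  intro k
  induction k with
  | zero =>
    intro c r hr
    have hsub : {x ∈ ball c r |
        ((0 : ℕ) : ℝ) * (2 ^ (n + 1) * B) < |b x - ⨍ y in ball c r, b y|} ⊆ ball c r :=
      fun x hx => hx.1
    simpa using measure_mono hsub
  | succ k ih =>
    intro c r hr
    set p : (Fin n → ℝ) × ℝ := (c, r) with hpdef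
    have hp : 0 < p.2 := hr
    set A := ⨍ y in ball c r, b y with hA
    have hoscp : ⨍ y in cb p, |b y - ⨍ y in cb p, b y| ≤ B := hbmo c r hr
    set S := Sel b p (⨍ y in cb p, b y) (2 * B) with hSdef
    have hK : (0:ℝ) < 2 ^ (n + 1) * B := by positivity
    -- a.e. covering inclusion
    have hcov : ∀ᵐ x, x ∈ {x ∈ ball c r |
        ((k : ℝ) + 1) * (2 ^ (n + 1) * B) < |b x - A|} →
        x ∈ ⋃ l ∈ S, {y ∈ cb (cube p l) |
          (k : ℝ) * (2 ^ (n + 1) * B) < |b y - ⨍ z in cb (cube p l), b z|} := by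
      filter_upwards [ae_cover hb p hp (⨍ y in cb p, b y) (2 * B)] with x hx hxT
      obtain ⟨hxp, hxA⟩ := hxT
      have hlam : 2 * B < |b x - A| := by
        have h2 : 2 * B ≤ ((k : ℝ) + 1) * (2 ^ (n + 1) * B) := by
          have h3 : (2:ℝ) ≤ 2 ^ (n + 1) := by
            calc (2:ℝ) = 2 ^ 1 := (pow_one 2).symm
            _ ≤ 2 ^ (n + 1) := pow_le_pow_right₀ one_le_two (by omega)
          nlinarith [Nat.cast_nonneg (α := ℝ) k]
        linarith
      have hxU := hx ⟨hxp, hlam⟩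
      obtain ⟨l, hlS, hxl⟩ := mem_iUnion₂.mp hxU
      refine mem_iUnion₂.mpr ⟨l, hlS, hxl, ?_⟩
      have hdev : |(⨍ z in cb (cube p l), b z) - A| ≤ 2 ^ (n + 1) * B := by
        simpa only [show cb p = ball c r from rfl, ← hA] using sel_mean_dev hb hB p hp hoscp hlS
      have habs : |b x - ⨍ z in cb (cube p l), b z| ≥
          |b x - A| - |(⨍ z in cb (cube p l), b z) - A| := by
        have := abs_sub_abs_le_abs_sub (b x - A) ((⨍ z in cb (cube p l), b z) - A)
        have heq : (b x - A) - ((⨍ z in cb (cube p l), b z) - A)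
            = b x - ⨍ z in cb (cube p l), b z := by ring
        rw [heq] at this
        linarith [abs_sub_abs_le_abs_sub (b x - A) ((⨍ z in cb (cube p l), b z) - A)]
      linarith [hdev, habs, hxA]
    push_cast
    calc volume {x ∈ ball c r | ((k : ℝ) + 1) * (2 ^ (n + 1) * B) < |b x - A|}
        ≤ volume (⋃ l ∈ S, {y ∈ cb (cube p l) |
            (k : ℝ) * (2 ^ (n + 1) * B) < |b y - ⨍ z in cb (cube p l), b z|}) := by
          exact measure_mono_ae hcov
      _ ≤ ∑' l : S, volume {y ∈ cb (cube p (l : List (Fin n → Bool))) |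
            (k : ℝ) * (2 ^ (n + 1) * B) < |b y - ⨍ z in cb (cube p l), b z|} :=
          measure_biUnion_le volume (to_countable S) _
      _ ≤ ∑' l : S, 2⁻¹ ^ k * volume (cb (cube p (l : List (Fin n → Bool)))) :=
          ENNReal.tsum_le_tsum fun l =>
            ih (cube p (l : List (Fin n → Bool))).1 (cube p (l : List (Fin n → Bool))).2
              (cube_snd_pos p hp _)
      _ = 2⁻¹ ^ k * ∑' l : S, volume (cb (cube p (l : List (Fin n → Bool)))) :=
          ENNReal.tsum_mul_left
      _ ≤ 2⁻¹ ^ k * (2⁻¹ * volume (cb p)) :=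
          mul_le_mul_right (sel_sum_le hb hB p hp hoscp) _
      _ = 2⁻¹ ^ (k + 1) * volume (ball c r) := by
          rw [← mul_assoc, pow_succ]
          rfl

end JN

end JNAux

/-- John–Nirenberg: there are constants `C₁, C₂ > 0` depending
only on the dimension such that for every `b ∈ BMO(ℝⁿ)` (with BMO seminorm at
most `B`), every cube `Q` (a sup-norm ball of `ℝⁿ`) and every `t > 0`,
`|{x ∈ Q : |b(x) − b_Q| > t}| ≤ C₁ |Q| exp(−C₂ t / B)`. -/
theorem john_nirenberg (n : ℕ) :
    ∃ C₁ C₂ : ℝ, 0 < C₁ ∧ 0 < C₂ ∧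
      ∀ (b : (Fin n → ℝ) → ℝ) (B : ℝ), LocallyIntegrable b volume → 0 < B →
        (∀ (c : Fin n → ℝ) (r : ℝ), 0 < r →
          ⨍ x in ball c r, |b x - ⨍ y in ball c r, b y| ≤ B) →
        ∀ (c : Fin n → ℝ) (r t : ℝ), 0 < r → 0 < t →
          volume {x ∈ ball c r | t < |b x - ⨍ y in ball c r, b y|} ≤
            ENNReal.ofReal (C₁ * (volume (ball c r)).toReal *
              Real.exp (-C₂ * t / B)) := by
  refine ⟨2, Real.log 2 / 2 ^ (n + 1), by norm_num,
    div_pos (Real.log_pos one_lt_two) (by positivity), ?_⟩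
  intro b B hb hB hbmo c r t hr ht
  set K := 2 ^ (n + 1) * B with hK
  have hKpos : 0 < K := by positivity
  set k := ⌊t / K⌋₊ with hk
  have hk1 : (k : ℝ) * K ≤ t := by
    rw [hk]
    have := Nat.floor_le (show (0:ℝ) ≤ t / K by positivity)
    calc (⌊t / K⌋₊ : ℝ) * K ≤ t / K * K := by nlinarith
      _ = t := div_mul_cancel₀ t hKpos.ne'
  have hk2 : t / K < (k : ℝ) + 1 := Nat.lt_floor_add_one _
  have hmono : {x ∈ ball c r | t < |b x - ⨍ y in ball c r, b y|} ⊆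
      {x ∈ ball c r | (k : ℝ) * K < |b x - ⨍ y in ball c r, b y|} :=
    fun x hx => ⟨hx.1, lt_of_le_of_lt hk1 hx.2⟩
  have h1 := (measure_mono hmono).trans (JN.main_ind hb hB hbmo k c r hr)
  refine h1.trans ?_
  have hv : volume (ball c r) = ENNReal.ofReal ((2 * r) ^ n) := JN.vol_cb (c, r) hr
  rw [hv, show ((2 : ENNReal)⁻¹ ^ k) = ENNReal.ofReal ((2⁻¹ : ℝ) ^ k) by
      rw [ENNReal.ofReal_pow (by norm_num), ENNReal.ofReal_inv_of_pos two_pos]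
      norm_num,
    ← ENNReal.ofReal_mul (by positivity)]
  apply ENNReal.ofReal_le_ofReal
  rw [ENNReal.toReal_ofReal (by positivity)]
  have hexp : (2⁻¹ : ℝ) ^ k ≤ 2 * Real.exp (-(Real.log 2 / 2 ^ (n + 1)) * t / B) := by
    have h2 : (2⁻¹ : ℝ) ^ k = Real.exp ((k : ℝ) * Real.log 2⁻¹) := by
      rw [Real.exp_nat_mul, Real.exp_log (by norm_num)]
    have h3 : 2 * Real.exp (-(Real.log 2 / 2 ^ (n + 1)) * t / B)
        = Real.exp (Real.log 2 + -(Real.log 2 / 2 ^ (n + 1)) * t / B) := by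
      rw [Real.exp_add, Real.exp_log two_pos]
    rw [h2, Real.log_inv, h3]
    apply Real.exp_le_exp.mpr
    have hlog : 0 < Real.log 2 := Real.log_pos one_lt_two
    have ht4 : -(Real.log 2 / 2 ^ (n + 1)) * t / B = -(Real.log 2) * (t / K) := by
      rw [hK]
      field_simp
    rw [ht4]
    nlinarith [mul_le_mul_of_nonneg_left hk2.le hlog.le]
  calc (2⁻¹ : ℝ) ^ k * (2 * r) ^ n
      ≤ (2 * Real.exp (-(Real.log 2 / 2 ^ (n + 1)) * t / B)) * (2 * r) ^ n :=
        mul_le_mul_of_nonneg_right hexp (by positivity)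
    _ = 2 * (2 * r) ^ n * Real.exp (-(Real.log 2 / 2 ^ (n + 1)) * t / B) := by ring
end

section
/- Suppose b is locally integrable on ℝⁿ and there exists C > 0 such that for all λ > 0 and all f ∈ L(1+log⁺L), |{x : C_b(f)(x) > λ}| ≤ C ∫ (|f|/λ)(1 + log⁺(|f|/λ)). Then b ∈ BMO(ℝⁿ). -/
open MeasureTheory Metric

section Aux

variable {α : Type*} [MeasurableSpace α] {μ : Measure α} {s : Set α}

/-- Monotonicity of set averages. -/
lemma my_avg_mono (hs : MeasurableSet s) {u v : α → ℝ}
    (hu : IntegrableOn u s μ) (hv : IntegrableOn v s μ) (h : ∀ y ∈ s, u y ≤ v y) :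
    ⨍ y in s, u y ∂μ ≤ ⨍ y in s, v y ∂μ := by
  rw [setAverage_eq, setAverage_eq, smul_eq_mul, smul_eq_mul]
  exact mul_le_mul_of_nonneg_left (setIntegral_mono_on hu hv hs h)
    (inv_nonneg.2 ENNReal.toReal_nonneg)

/-- Average of `g + const`. -/
lemma my_avg_add_const (hs0 : μ s ≠ 0) (hst : μ s ≠ ⊤) {g : α → ℝ}
    (hg : IntegrableOn g s μ) (a : ℝ) :
    ⨍ y in s, (g y + a) ∂μ = (⨍ y in s, g y ∂μ) + a := by
  have hV : μ.real s ≠ 0 := ENNReal.toReal_ne_zero.2 ⟨hs0, hst⟩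
  rw [setAverage_eq, setAverage_eq,
    integral_add hg (integrableOn_const hst),
    setIntegral_const, smul_eq_mul, smul_eq_mul, smul_eq_mul]
  field_simp

end Aux

/-- if the maximal commutator `C_b` satisfies the weak-type
`L(1+log⁺L)` estimate, then `b ∈ BMO(ℝⁿ)`, i.e. its mean oscillations over
cubes are uniformly bounded. -/
theorem bmo_of_weak_LlogL_maximalComm {n : ℕ} (b : (Fin n → ℝ) → ℝ)
    (hb : LocallyIntegrable b volume) (C : ℝ) (hC : 0 < C)
    (h : ∀ f : (Fin n → ℝ) → ℝ, Measurable f →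
      (∫⁻ x, ENNReal.ofReal (|f x| * (1 + max (Real.log |f x|) 0)) < ⊤) →
      ∀ l : ℝ, 0 < l →
        volume {x | l < maximalComm b f x} ≤
          ENNReal.ofReal (C * ∫ x,
            (|f x| / l) * (1 + max (Real.log (|f x| / l)) 0))) :
    ∃ B : ℝ, ∀ (c : Fin n → ℝ) (r : ℝ), 0 < r →
      ⨍ x in ball c r, |b x - ⨍ y in ball c r, b y| ≤ B := by
  classical
  refine ⟨2 * C + 2, fun c r hr => ?_⟩
  by_contra hA
  push_neg at hA
  set Q : Set (Fin n → ℝ) := ball c r with hQdef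
  have hQm : MeasurableSet Q := measurableSet_ball
  have hQpos : volume Q ≠ 0 := (measure_ball_pos _ _ hr).ne'
  have hQtop : volume Q ≠ ⊤ := measure_ball_lt_top.ne
  set V : ℝ := volume.real Q with hV
  have hVpos : 0 < V := ENNReal.toReal_pos hQpos hQtop
  set m : ℝ := ⨍ y in Q, b y with hm
  set A : ℝ := ⨍ x in Q, |b x - m| with hAdef
  -- `hA : 2 * C + 2 < A`
  have hbQ : IntegrableOn b Q volume :=
    (hb.integrableOn_isCompact (isCompact_closedBall c r)).mono_set ball_subset_closedBall
  have hconstQ : ∀ a : ℝ, IntegrableOn (fun _ => a) Q volume := fun a =>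
    integrableOn_const hQtop
  have habs : ∀ x : Fin n → ℝ, IntegrableOn (fun y => |b x - b y|) Q volume := fun x =>
    ((hconstQ (b x)).sub hbQ).abs
  -- the core pointwise lower bound : A / 2 ≤ ⨍_Q |b x - b y| for EVERY x
  have core : ∀ x : Fin n → ℝ, A / 2 ≤ ⨍ y in Q, |b x - b y| := by
    intro x
    set I : ℝ := ∫ y in Q, |b x - b y| with hI
    have hIb : ∫ y in Q, b y = V * m := by
      rw [hm, setAverage_eq, smul_eq_mul, hV]
      field_simp [show volume.real Q ≠ 0 from hVpos.ne']
    have claim1 : |b x - m| * V ≤ I := by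
      have h1 : ∫ y in Q, (b x - b y) = V * (b x - m) := by
        rw [integral_sub (hconstQ (b x)) hbQ, setIntegral_const, hIb, smul_eq_mul]
        ring
      have h2 : |∫ y in Q, (b x - b y)| ≤ ∫ y in Q, |b x - b y| := by
        simpa [Real.norm_eq_abs] using
          norm_integral_le_integral_norm (μ := volume.restrict Q) (fun y => b x - b y)
      rw [h1] at h2
      calc |b x - m| * V = |V * (b x - m)| := by
            rw [abs_mul, abs_of_pos hVpos]; ring
        _ ≤ I := h2
    have claim2 : A * V - |b x - m| * V ≤ I := by
      have hAV : ∫ y in Q, |b y - m| = A * V := by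
        rw [hAdef, setAverage_eq, smul_eq_mul, hV]
        field_simp [show volume.real Q ≠ 0 from hVpos.ne']
      have hmono : ∫ y in Q, |b y - m| ≤ ∫ y in Q, (|b x - b y| + |b x - m|) := by
        apply setIntegral_mono_on (hbQ.sub (hconstQ m)).abs ((habs x).add (hconstQ _)) hQm
        intro y _
        calc |b y - m| = |(b x - m) - (b x - b y)| := by ring_nf
          _ ≤ |b x - m| + |b x - b y| := abs_sub _ _
          _ = |b x - b y| + |b x - m| := by ring
      rw [hAV, integral_add (habs x) (hconstQ _), setIntegral_const, smul_eq_mul] at hmono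
      linarith
    have h2I : A * V ≤ 2 * I := by linarith
    rw [setAverage_eq, smul_eq_mul, ← hV, ← hI]
    have hVinv : 0 < V⁻¹ := inv_pos.2 hVpos
    have hcan : V⁻¹ * V = 1 := inv_mul_cancel₀ hVpos.ne'
    nlinarith [mul_le_mul_of_nonneg_left h2I hVinv.le]
  -- the test function
  set f : (Fin n → ℝ) → ℝ := Q.indicator (fun _ => (1 : ℝ)) with hf
  have hfmeas : Measurable f := measurable_const.indicator hQm
  have habsf : ∀ y, |f y| = Q.indicator (fun _ => (1 : ℝ)) y := by
    intro y
    by_cases hy : y ∈ Q <;> simp [hf, Set.indicator_of_mem, Set.indicator_of_notMem, hy]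
  have hfun_eq : ∀ x : Fin n → ℝ,
      (fun y => |b x - b y| * |f y|) = Q.indicator (fun y => |b x - b y|) := by
    intro x
    funext y
    by_cases hy : y ∈ Q <;>
      simp [hf, Set.indicator_of_mem, Set.indicator_of_notMem, hy]
  have hIntAll : ∀ x : Fin n → ℝ, Integrable (fun y => |b x - b y| * |f y|) volume := by
    intro x
    rw [hfun_eq x]
    exact IntegrableOn.integrable_indicator (habs x) hQm
  -- x-wise a.e. boundedness of the defining family of the supremum
  set g : (Fin n → ℝ) → ℝ := Q.indicator (fun y => |b y|) with hgdef
  have hg : Integrable g volume := IntegrableOn.integrable_indicator hbQ.abs hQm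
  have hg0 : ∀ y, 0 ≤ g y := fun y => Set.indicator_nonneg (fun _ _ => abs_nonneg _) y
  have hpt : ∀ x y, |b x - b y| * |f y| ≤ |b x| + g y := by
    intro x y
    by_cases hy : y ∈ Q
    · simp only [hf, hgdef, Set.indicator_of_mem hy, abs_one, mul_one]
      exact abs_sub _ _
    · simp only [hf, hgdef, Set.indicator_of_notMem hy, abs_zero, mul_zero, add_zero]
      positivity
  have hae : ∀ᵐ x, BddAbove (Set.range fun
      P : {P : (Fin n → ℝ) × ℝ // 0 < P.2 ∧ x ∈ ball P.1 P.2} =>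
        ⨍ y in ball P.1.1 P.1.2, |b x - b y| * |f y|) := by
    filter_upwards [IsUnifLocDoublingMeasure.ae_tendsto_average_norm_sub (μ := volume)
      hg.locallyIntegrable 1] with x hx
    -- Step 1: small-ball bound from the differentiation theorem
    have step1 : ∃ ε : ℝ, 0 < ε ∧ ∀ (z : Fin n → ℝ) (t : ℝ), 0 < t → t ≤ ε →
        x ∈ closedBall z t → ⨍ y in closedBall z t, g y ≤ g x + 1 := by
      by_contra hcon
      push_neg at hcon
      choose z s hs0 hsle hxmem hgt using fun j : ℕ =>
        hcon ((j : ℝ) + 1)⁻¹ (by positivity)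
      have hδ : Filter.Tendsto s Filter.atTop (nhdsWithin 0 (Set.Ioi 0)) := by
        rw [tendsto_nhdsWithin_iff]
        refine ⟨?_, Filter.Eventually.of_forall fun j => hs0 j⟩
        have hlim : Filter.Tendsto (fun j : ℕ => ((j : ℝ) + 1)⁻¹) Filter.atTop (nhds 0) := by
          exact (tendsto_one_div_add_atTop_nhds_zero_nat (𝕜 := ℝ)).congr (fun j => one_div _)
        exact squeeze_zero (fun j => (hs0 j).le) hsle hlim
      have hlim := hx z s hδ (Filter.Eventually.of_forall fun j => by
        simpa using hxmem j)
      obtain ⟨j, hj⟩ := (hlim.eventually_lt_const one_pos).exists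
      -- contradiction at index j
      have hcb : MeasurableSet (closedBall (z j) (s j)) := measurableSet_closedBall
      have hv0 : volume (closedBall (z j) (s j)) ≠ 0 :=
        (measure_closedBall_pos _ _ (hs0 j)).ne'
      have hvt : volume (closedBall (z j) (s j)) ≠ ⊤ := measure_closedBall_lt_top.ne
      have hgint : IntegrableOn g (closedBall (z j) (s j)) volume := hg.integrableOn
      have hnint : IntegrableOn (fun y => ‖g y - g x‖) (closedBall (z j) (s j)) volume :=
        ((hg.integrableOn.sub (integrableOn_const hvt)).norm)
      have hmono : ⨍ y in closedBall (z j) (s j), g y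
          ≤ ⨍ y in closedBall (z j) (s j), (‖g y - g x‖ + g x) := by
        apply my_avg_mono hcb hgint (hnint.add (integrableOn_const hvt))
        intro y _
        have h1 : g y - g x ≤ |g y - g x| := le_abs_self _
        show g y ≤ ‖g y - g x‖ + g x
        rw [Real.norm_eq_abs]
        linarith
      rw [my_avg_add_const hv0 hvt hnint (g x)] at hmono
      have := hgt j
      linarith
    obtain ⟨ε, hε, hbound⟩ := step1
    refine ⟨|b x| + max (g x + 1) (((2 * ε) ^ n)⁻¹ * ∫ y, g y), ?_⟩
    rintro t ⟨⟨⟨zz, ss⟩, hss, hxz⟩, rfl⟩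
    have hxcb : x ∈ closedBall zz ss := ball_subset_closedBall hxz
    have hBm : MeasurableSet (ball zz ss) := measurableSet_ball
    have hvol : volume (ball zz ss) = ENNReal.ofReal ((2 * ss) ^ n) := by
      simpa using Real.volume_pi_ball zz hss
    have hvolcb : volume (closedBall zz ss) = ENNReal.ofReal ((2 * ss) ^ n) := by
      simpa using Real.volume_pi_closedBall zz hss.le
    have hv0 : volume (ball zz ss) ≠ 0 := (measure_ball_pos _ _ hss).ne'
    have hvt : volume (ball zz ss) ≠ ⊤ := measure_ball_lt_top.ne
    have h1 : ⨍ y in ball zz ss, |b x - b y| * |f y| ≤ ⨍ y in ball zz ss, (g y + |b x|) := by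
      apply my_avg_mono hBm (hIntAll x).integrableOn
        (hg.integrableOn.add (integrableOn_const hvt))
      intro y _
      rw [add_comm]
      exact hpt x y
    have h2 : ⨍ y in ball zz ss, (g y + |b x|) = (⨍ y in ball zz ss, g y) + |b x| :=
      my_avg_add_const hv0 hvt hg.integrableOn _
    have h3 : ⨍ y in ball zz ss, g y ≤ max (g x + 1) (((2 * ε) ^ n)⁻¹ * ∫ y, g y) := by
      by_cases hsε : ss ≤ ε
      · refine le_max_of_le_left ?_
        have hint_sub : ∫ y in ball zz ss, g y ≤ ∫ y in closedBall zz ss, g y :=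
          setIntegral_mono_set hg.integrableOn (Filter.Eventually.of_forall hg0)
            (HasSubset.Subset.eventuallyLE ball_subset_closedBall)
        have hcbavg : ⨍ y in ball zz ss, g y ≤ ⨍ y in closedBall zz ss, g y := by
          rw [setAverage_eq, setAverage_eq, smul_eq_mul, smul_eq_mul, measureReal_def, measureReal_def, hvol, hvolcb]
          exact mul_le_mul_of_nonneg_left hint_sub (by positivity)
        exact hcbavg.trans (hbound zz ss hss hsε hxcb)
      · push_neg at hsε
        refine le_max_of_le_right ?_
        rw [setAverage_eq, smul_eq_mul, measureReal_def, hvol, ENNReal.toReal_ofReal (by positivity)]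
        have hIle : ∫ y in ball zz ss, g y ≤ ∫ y, g y :=
          setIntegral_le_integral hg (Filter.Eventually.of_forall hg0)
        have hIpos : 0 ≤ ∫ y in ball zz ss, g y := setIntegral_nonneg hBm fun y _ => hg0 y
        have hpow : (2 * ε) ^ n ≤ (2 * ss) ^ n :=
          pow_le_pow_left₀ (by positivity) (by linarith) n
        have hinv : ((2 * ss) ^ n)⁻¹ ≤ ((2 * ε) ^ n)⁻¹ :=
          inv_anti₀ (by positivity) hpow
        exact mul_le_mul hinv hIle hIpos (by positivity)
    calc ⨍ y in ball zz ss, |b x - b y| * |f y|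
        ≤ (⨍ y in ball zz ss, g y) + |b x| := h2 ▸ h1
      _ ≤ |b x| + max (g x + 1) (((2 * ε) ^ n)⁻¹ * ∫ y, g y) := by linarith [h3]
  -- finiteness of the Orlicz integral of the test function
  have hfin : ∫⁻ x, ENNReal.ofReal (|f x| * (1 + max (Real.log |f x|) 0)) < ⊤ := by
    have heq : ∀ x, ENNReal.ofReal (|f x| * (1 + max (Real.log |f x|) 0))
        = Q.indicator (fun _ => (1 : ENNReal)) x := by
      intro x
      by_cases hx : x ∈ Q
      · simp [hf, Set.indicator_of_mem hx]
      · simp [hf, Set.indicator_of_notMem hx]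
    calc ∫⁻ x, ENNReal.ofReal (|f x| * (1 + max (Real.log |f x|) 0))
        = ∫⁻ x, Q.indicator (fun _ => (1 : ENNReal)) x := by simp only [heq]
      _ = volume Q := by
          rw [lintegral_indicator (f := fun _ => (1 : ENNReal)) hQm, setLIntegral_one]
      _ < ⊤ := hQtop.lt_top
  have hlpos : (0 : ℝ) < C + 1 := by linarith
  have hkey := h f hfmeas hfin (C + 1) hlpos
  have hIeq : (∫ x, (|f x| / (C + 1)) * (1 + max (Real.log (|f x| / (C + 1))) 0))
      = V * (1 / (C + 1)) := by
    have hfun : (fun x => (|f x| / (C + 1)) * (1 + max (Real.log (|f x| / (C + 1))) 0))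
        = Q.indicator (fun _ => 1 / (C + 1)) := by
      funext x
      by_cases hx : x ∈ Q
      · have hfx : f x = 1 := Set.indicator_of_mem hx _
        have hlog : Real.log (1 / (C + 1)) ≤ 0 :=
          Real.log_nonpos (by positivity) (by rw [div_le_one hlpos]; linarith)
        rw [Set.indicator_of_mem hx, hfx, abs_one, max_eq_right hlog]
        ring
      · have hfx : f x = 0 := Set.indicator_of_notMem hx _
        rw [Set.indicator_of_notMem hx, hfx]
        simp
    rw [hfun, integral_indicator hQm, setIntegral_const, smul_eq_mul, ← hV]
  set G : Set (Fin n → ℝ) := {x | BddAbove (Set.range fun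
      P : {P : (Fin n → ℝ) × ℝ // 0 < P.2 ∧ x ∈ ball P.1 P.2} =>
        ⨍ y in ball P.1.1 P.1.2, |b x - b y| * |f y|)} with hGdef
  have hGnull : volume Gᶜ = 0 := by
    rw [hGdef, Set.compl_setOf]
    exact ae_iff.1 hae
  have hsub : Q ∩ G ⊆ {x | C + 1 < maximalComm b f x} := by
    rintro x ⟨hxQ, hxG⟩
    have hterm := le_ciSup hxG
      (⟨(c, r), hr, hxQ⟩ : {P : (Fin n → ℝ) × ℝ // 0 < P.2 ∧ x ∈ ball P.1 P.2})
    have heqt : (⨍ y in ball c r, |b x - b y| * |f y|) = ⨍ y in Q, |b x - b y| := by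
      apply setAverage_congr_fun hQm
      apply Filter.Eventually.of_forall
      intro y hy
      rw [habsf y, Set.indicator_of_mem hy, mul_one]
    have hge : (⨍ y in Q, |b x - b y|) ≤ maximalComm b f x := by
      rw [maximalComm, ← heqt]
      exact hterm
    have hcore := core x
    show C + 1 < maximalComm b f x
    linarith
  have hQle : volume Q ≤ volume {x | C + 1 < maximalComm b f x} := by
    calc volume Q = volume (Q ∩ G) := (measure_inter_conull hGnull).symm
      _ ≤ _ := measure_mono hsub
  have hfinal : volume Q ≤ ENNReal.ofReal (C * (V * (1 / (C + 1)))) := by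
    rw [← hIeq]
    exact hQle.trans hkey
  have hreal : V ≤ C * (V * (1 / (C + 1))) := by
    have h1 := ENNReal.toReal_mono ENNReal.ofReal_ne_top hfinal
    rwa [ENNReal.toReal_ofReal (by positivity), ← measureReal_def, ← hV] at h1
  have hVle : V * (C + 1) ≤ C * V := by
    calc V * (C + 1) ≤ C * (V * (1 / (C + 1))) * (C + 1) :=
          mul_le_mul_of_nonneg_right hreal hlpos.le
      _ = C * V := by field_simp
  nlinarith [hVle, hVpos, hC]
end
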